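/- arXiv:1402.0763 — 3 statements merged into one kernel-verified Lean document; each statement's English description precedes it below -/
import Mathlib

section
/- Let A and B be self-adjoint operators with spectral projections P = 1_{A<0} and Q = 1_{B<0}. If the operators (1-P) B_- (1-P) and P B_+ P are trace class, then (Q-P)|B|^{1/2} is Hilbert--Schmidt and ‖(Q-P)|B|^{1/2}‖_{S_2}^2 = tr((1-P) B_- (1-P)) + tr(P B_+ P). -/
open scoped ENNReal NNReal

open ContinuousLinearMap in
private lemma parseval_nn {H : Type*} [NormedAddCommGroup H] [InnerProductSpace ℂ H]
    [CompleteSpace H] {ι : Type*} (e : HilbertBasis ι ℂ H) (x : H) :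
    HasSum (fun i => ‖(inner ℂ (e i) x : ℂ)‖₊ ^ 2) (‖x‖₊ ^ 2) := by
  rw [← NNReal.hasSum_coe]
  have h2 : HasSum (fun i => Complex.reCLM ((inner ℂ x (e i) : ℂ) * inner ℂ (e i) x))
      (Complex.reCLM (inner ℂ x x : ℂ)) := Complex.reCLM.hasSum (e.hasSum_inner_mul_inner x x)
  convert h2 using 2 with i
  · rw [← inner_conj_symm x (e i)]
    set z := (inner ℂ (e i) x : ℂ)
    push_cast
    simp [Complex.mul_re, Complex.sq_norm, Complex.normSq_apply, sq, ← Complex.normSq_apply, Complex.normSq_eq_norm_sq]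
  · push_cast
    simpa using (inner_self_eq_norm_sq (𝕜 := ℂ) x).symm

open ContinuousLinearMap in
private lemma transfer {H : Type*} [NormedAddCommGroup H] [InnerProductSpace ℂ H]
    [CompleteSpace H] {ι : Type*} (e : HilbertBasis ι ℂ H) (X : H →L[ℂ] H)
    (h : Summable fun i => ‖(star X) (e i)‖ ^ 2) :
    Summable (fun i => ‖X (e i)‖ ^ 2) ∧
      ∑' i, ‖X (e i)‖ ^ 2 = ∑' i, ‖(star X) (e i)‖ ^ 2 := by
  have key : ∀ (Y : H →L[ℂ] H),
      (∑' i, (↑(‖Y (e i)‖₊ ^ 2) : ℝ≥0∞)) =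
        ∑' i, ∑' j, (↑(‖(inner ℂ (e j) (Y (e i)) : ℂ)‖₊ ^ 2) : ℝ≥0∞) :=
    fun Y => tsum_congr fun i => (ENNReal.tsum_coe_eq (parseval_nn e (Y (e i)))).symm
  have entry : ∀ i j, ‖(inner ℂ (e j) (X (e i)) : ℂ)‖₊ = ‖(inner ℂ (e i) ((star X) (e j)) : ℂ)‖₊ := by
    intro i j
    rw [star_eq_adjoint, ← adjoint_inner_left X (e i) (e j),
      ← inner_conj_symm (e i) (ContinuousLinearMap.adjoint X (e j)), RCLike.nnnorm_conj]
  have swap : (∑' i, (↑(‖X (e i)‖₊ ^ 2) : ℝ≥0∞)) = ∑' i, (↑(‖(star X) (e i)‖₊ ^ 2) : ℝ≥0∞) := by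
    rw [key X, key (star X), ENNReal.tsum_comm]
    exact tsum_congr fun j => tsum_congr fun i => by rw [entry i j]
  have hs : Summable fun i => ‖(star X) (e i)‖₊ ^ 2 := by
    rw [← NNReal.summable_coe]
    simpa using h
  have hne : (∑' i, (↑(‖X (e i)‖₊ ^ 2) : ℝ≥0∞)) ≠ ⊤ := by
    rw [swap]
    exact ENNReal.tsum_coe_ne_top_iff_summable.mpr hs
  have hsX : Summable fun i => ‖X (e i)‖₊ ^ 2 := ENNReal.tsum_coe_ne_top_iff_summable.mp hne
  have hsXR : Summable fun i => ‖X (e i)‖ ^ 2 := by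
    simpa using NNReal.summable_coe.mpr hsX
  refine ⟨hsXR, ?_⟩
  have e1 : (((∑' i, ‖X (e i)‖₊ ^ 2 : ℝ≥0) : ℝ≥0∞)) = ((∑' i, ‖(star X) (e i)‖₊ ^ 2 : ℝ≥0) : ℝ≥0∞) := by
    rw [ENNReal.coe_tsum hsX, ENNReal.coe_tsum hs, swap]
  have e2 : (∑' i, ‖X (e i)‖₊ ^ 2 : ℝ≥0) = ∑' i, ‖(star X) (e i)‖₊ ^ 2 := by
    exact_mod_cast e1
  calc ∑' i, ‖X (e i)‖ ^ 2 = ((∑' i, ‖X (e i)‖₊ ^ 2 : ℝ≥0) : ℝ) := by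
        rw [NNReal.coe_tsum]; push_cast; rfl
    _ = ((∑' i, ‖(star X) (e i)‖₊ ^ 2 : ℝ≥0) : ℝ) := by rw [e2]
    _ = ∑' i, ‖(star X) (e i)‖ ^ 2 := by rw [NNReal.coe_tsum]; push_cast; rfl

/-- Let `B` be a (bounded) self-adjoint operator with positive/negative parts
`B = Bp - Bm`, `|B| = Bp + Bm = S²` (so `S = |B|^{1/2}`), let `Q = 1_{B<0}` be its negative
spectral projection and `P` any orthogonal projection.  If `(1-P) B_- (1-P)` and `P B_+ P` are
trace class (diagonal summable in a Hilbert basis `e`), then `(Q-P)|B|^{1/2}` is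
Hilbert--Schmidt and
`‖(Q-P)|B|^{1/2}‖_{S₂}² = tr((1-P) B_- (1-P)) + tr(P B_+ P)`. -/
theorem stmt1 {H : Type*} [NormedAddCommGroup H] [InnerProductSpace ℂ H] [CompleteSpace H]
    {ι : Type*} (e : HilbertBasis ι ℂ H)
    (B P Q Bp Bm S : H →L[ℂ] H)
    (hB : IsSelfAdjoint B)
    (hBp : Bp.IsPositive) (hBm : Bm.IsPositive)
    (hBdec : B = Bp - Bm) (hBorth : Bp * Bm = 0)
    (hP : IsSelfAdjoint P) (hP2 : P * P = P)
    (hQ : IsSelfAdjoint Q) (hQ2 : Q * Q = Q)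
    (hQBp : Q * Bp = 0) (hQBm : Q * Bm = Bm)
    (hS : S.IsPositive) (hS2 : S * S = Bp + Bm)
    (h1 : Summable fun i => (inner ℂ (((1 - P) * Bm * (1 - P)) (e i)) (e i) : ℂ).re)
    (h2 : Summable fun i => (inner ℂ ((P * Bp * P) (e i)) (e i) : ℂ).re) :
    Summable (fun i => ‖((Q - P) * S) (e i)‖ ^ 2) ∧
      ∑' i, ‖((Q - P) * S) (e i)‖ ^ 2 =
        (∑' i, (inner ℂ (((1 - P) * Bm * (1 - P)) (e i)) (e i) : ℂ).re) +
          ∑' i, (inner ℂ ((P * Bp * P) (e i)) (e i) : ℂ).re := by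
  have hSsa : IsSelfAdjoint S := hS.isSelfAdjoint
  have hP1 : IsSelfAdjoint (1 - P) := (IsSelfAdjoint.one (H →L[ℂ] H)).sub hP
  have hQ1 : IsSelfAdjoint (1 - Q) := (IsSelfAdjoint.one (H →L[ℂ] H)).sub hQ
  have hBmQ : Bm * Q = Bm := by
    have := congrArg star hQBm
    rwa [star_mul, hQ.star_eq, hBm.isSelfAdjoint.star_eq] at this
  have hBpQ : Bp * Q = 0 := by
    have := congrArg star hQBp
    rwa [star_mul, hQ.star_eq, hBp.isSelfAdjoint.star_eq, star_zero] at this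
  set X : H →L[ℂ] H := (1 - P) * Q * S with hXdef
  set Y : H →L[ℂ] H := P * (1 - Q) * S with hYdef
  have hstarX : star X = S * (Q * (1 - P)) := by
    simp [hXdef, star_mul, hSsa.star_eq, hQ.star_eq, hP1.star_eq, mul_assoc]
  have hstarY : star Y = S * ((1 - Q) * P) := by
    simp [hYdef, star_mul, hSsa.star_eq, hQ1.star_eq, hP.star_eq, mul_assoc]
  have hmidX : Q * (Bp + Bm) * Q = Bm := by
    rw [mul_add, hQBp, hQBm, zero_add, hBmQ]
  have hmidY : (1 - Q) * (Bp + Bm) * (1 - Q) = Bp := by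
    rw [sub_mul, one_mul, mul_add, hQBp, hQBm, zero_add, add_sub_cancel_right,
      mul_sub, mul_one, hBpQ, sub_zero]
  have hXX : X * star X = (1 - P) * Bm * (1 - P) := by
    have : X * star X = (1 - P) * (Q * (S * S) * Q) * (1 - P) := by
      rw [hstarX, hXdef]; noncomm_ring
    rw [this, hS2, hmidX]
  have hYY : Y * star Y = P * Bp * P := by
    have : Y * star Y = P * ((1 - Q) * (S * S) * (1 - Q)) * P := by
      rw [hstarY, hYdef]; noncomm_ring
    rw [this, hS2, hmidY]
  -- rewrite the diagonal entries as squared norms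
  have hterm1 : ∀ i, (inner ℂ (((1 - P) * Bm * (1 - P)) (e i)) (e i) : ℂ).re
      = ‖(star X) (e i)‖ ^ 2 := by
    intro i
    rw [← hXX, ContinuousLinearMap.mul_apply,
      ← ContinuousLinearMap.adjoint_inner_right X ((star X) (e i)) (e i),
      ← ContinuousLinearMap.star_eq_adjoint]
    simpa using inner_self_eq_norm_sq (𝕜 := ℂ) ((star X) (e i))
  have hterm2 : ∀ i, (inner ℂ ((P * Bp * P) (e i)) (e i) : ℂ).re
      = ‖(star Y) (e i)‖ ^ 2 := by
    intro i
    rw [← hYY, ContinuousLinearMap.mul_apply,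
      ← ContinuousLinearMap.adjoint_inner_right Y ((star Y) (e i)) (e i),
      ← ContinuousLinearMap.star_eq_adjoint]
    simpa using inner_self_eq_norm_sq (𝕜 := ℂ) ((star Y) (e i))
  have h1' : Summable fun i => ‖(star X) (e i)‖ ^ 2 := h1.congr hterm1
  have h2' : Summable fun i => ‖(star Y) (e i)‖ ^ 2 := h2.congr hterm2
  obtain ⟨hXs, hXt⟩ := transfer e X h1'
  obtain ⟨hYs, hYt⟩ := transfer e Y h2'
  have hdec : (Q - P) * S = X - Y := by rw [hXdef, hYdef]; noncomm_ring
  have hpyth : ∀ v : H, ‖((Q - P) * S) v‖ ^ 2 = ‖X v‖ ^ 2 + ‖Y v‖ ^ 2 := by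
    intro v
    have horth : (inner ℂ (X v) (Y v) : ℂ) = 0 := by
      have hx : X v = (1 - P) ((Q * S) v) := by
        rw [hXdef, mul_assoc]; rfl
      have hy : Y v = P (((1 - Q) * S) v) := by
        rw [hYdef, mul_assoc]; rfl
      rw [hx, hy, ← ContinuousLinearMap.adjoint_inner_right (1 - P) ((Q * S) v) (P (((1 - Q) * S) v)),
        ← ContinuousLinearMap.star_eq_adjoint, hP1.star_eq, ← ContinuousLinearMap.mul_apply]
      have : (1 - P) * P = 0 := by rw [sub_mul, one_mul, hP2, sub_self]
      rw [this]
      simp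
    rw [hdec, ContinuousLinearMap.sub_apply, norm_sub_sq (𝕜 := ℂ), horth]
    simp
  constructor
  · apply Summable.congr (hXs.add hYs)
    intro i; exact (hpyth (e i)).symm
  · calc ∑' i, ‖((Q - P) * S) (e i)‖ ^ 2 = ∑' i, (‖X (e i)‖ ^ 2 + ‖Y (e i)‖ ^ 2) :=
        tsum_congr fun i => hpyth (e i)
      _ = (∑' i, ‖X (e i)‖ ^ 2) + ∑' i, ‖Y (e i)‖ ^ 2 := Summable.tsum_add hXs hYs
      _ = _ := by
        rw [hXt, hYt]
        congr 1
        · exact (tsum_congr fun i => (hterm1 i)).symm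
        · exact (tsum_congr fun i => (hterm2 i)).symm
end

section
/- Let A and B be self-adjoint operators, P = 1_{A<0}, Q = 1_{B<0}. Assume P(B-A)P is trace class. Then P(B_- - A_-)P and (1-P)(B_- - A_-)(1-P) are both trace class if and only if (Q-P)|B|^{1/2} is Hilbert--Schmidt, and in that case tr(P(B_- - A_-)P) + tr((1-P)(B_- - A_-)(1-P)) + tr(P(B-A)P) = ‖(Q-P)|B|^{1/2}‖_{S_2}^2. -/
open scoped InnerProductSpace ComplexConjugate
open ContinuousLinearMap

set_option linter.unusedSectionVars false
set_option linter.unusedVariables false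

section Helpers

variable {H : Type*} [NormedAddCommGroup H] [InnerProductSpace ℂ H] [CompleteSpace H]
  {ι : Type*}

private lemma parseval' (e : HilbertBasis ι ℂ H) (x : H) :
    HasSum (fun j => ‖(inner ℂ x (e j) : ℂ)‖ ^ 2) (‖x‖ ^ 2) := by
  have h := (e.hasSum_inner_mul_inner x x).mapL Complex.reCLM
  convert h using 2 with j
  · rw [show (inner ℂ (e j) x : ℂ) = starRingEnd ℂ (inner ℂ x (e j)) from (inner_conj_symm _ _).symm,
      Complex.mul_conj]
    simp [Complex.normSq_eq_norm_sq, ← Complex.ofReal_pow]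
  · simp [← inner_self_eq_norm_sq (𝕜 := ℂ)]

private lemma summable_sq_iff' (e : HilbertBasis ι ℂ H) (X : H →L[ℂ] H) :
    Summable (fun i => ‖X (e i)‖ ^ 2) ↔
      Summable (fun p : ι × ι => ‖(inner ℂ (X (e p.1)) (e p.2) : ℂ)‖ ^ 2) := by
  rw [summable_prod_of_nonneg (fun p => sq_nonneg _)]
  constructor
  · intro h
    refine ⟨fun i => (parseval' e (X (e i))).summable, ?_⟩
    convert h using 2 with i
    exact (parseval' e (X (e i))).tsum_eq
  · rintro ⟨-, h⟩
    convert h using 2 with i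
    exact (parseval' e (X (e i))).tsum_eq.symm

private lemma tsum_sq_eq' (e : HilbertBasis ι ℂ H) (X : H →L[ℂ] H)
    (h : Summable fun i => ‖X (e i)‖ ^ 2) :
    ∑' i, ‖X (e i)‖ ^ 2 = ∑' p : ι × ι, ‖(inner ℂ (X (e p.1)) (e p.2) : ℂ)‖ ^ 2 := by
  rw [Summable.tsum_prod' ((summable_sq_iff' e X).1 h) (fun i => (parseval' e (X (e i))).summable)]
  exact tsum_congr fun i => (parseval' e (X (e i))).tsum_eq.symm

private lemma inner_swap_norm (X : H →L[ℂ] H) (x y : H) :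
    ‖(inner ℂ (X x) y : ℂ)‖ = ‖(inner ℂ ((star X) y) x : ℂ)‖ := by
  rw [star_eq_adjoint, adjoint_inner_left, norm_inner_symm]

private lemma key_summable_iff (e : HilbertBasis ι ℂ H) (X : H →L[ℂ] H) :
    Summable (fun i => ‖X (e i)‖ ^ 2) ↔ Summable (fun i => ‖(star X) (e i)‖ ^ 2) := by
  rw [summable_sq_iff' e X, summable_sq_iff' e (star X),
    ← (Equiv.prodComm ι ι).summable_iff]
  apply summable_congr
  intro p
  have h2 := inner_swap_norm X (e p.2) (e p.1)
  simp only [Equiv.prodComm_apply, Function.comp_apply, Prod.fst_swap, Prod.snd_swap]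
  rw [h2]

private lemma key_tsum_eq (e : HilbertBasis ι ℂ H) (X : H →L[ℂ] H)
    (h : Summable fun i => ‖X (e i)‖ ^ 2) :
    ∑' i, ‖X (e i)‖ ^ 2 = ∑' i, ‖(star X) (e i)‖ ^ 2 := by
  rw [tsum_sq_eq' e X h, tsum_sq_eq' e (star X) ((key_summable_iff e X).1 h),
    ← (Equiv.prodComm ι ι).tsum_eq]
  apply tsum_congr
  intro p
  have h2 := inner_swap_norm X (e p.2) (e p.1)
  simp only [Equiv.prodComm_apply, Function.comp_apply, Prod.fst_swap, Prod.snd_swap]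
  rw [h2]

private lemma summable_comp' (e : HilbertBasis ι ℂ H) {X : H →L[ℂ] H} (Y : H →L[ℂ] H)
    (h : Summable fun i => ‖X (e i)‖ ^ 2) :
    Summable fun i => ‖(Y * X) (e i)‖ ^ 2 := by
  refine Summable.of_nonneg_of_le (fun i => sq_nonneg _) (fun i => ?_) (h.mul_left (‖Y‖ ^ 2))
  have h1 : ‖(Y * X) (e i)‖ ≤ ‖Y‖ * ‖X (e i)‖ := Y.le_opNorm (X (e i))
  calc ‖(Y * X) (e i)‖ ^ 2 ≤ (‖Y‖ * ‖X (e i)‖) ^ 2 := by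
        exact pow_le_pow_left₀ (norm_nonneg _) h1 2
    _ = ‖Y‖ ^ 2 * ‖X (e i)‖ ^ 2 := by ring

private lemma diag_mul_star' (X : H →L[ℂ] H) (v : H) :
    (inner ℂ ((X * star X) v) v : ℂ).re = ‖(star X) v‖ ^ 2 := by
  rw [mul_apply_eq_comp, star_eq_adjoint, show (inner ℂ (X ((adjoint X) v)) v : ℂ)
      = inner ℂ ((adjoint X) v) ((adjoint X) v) from by rw [← adjoint_inner_right]]
  simpa using inner_self_eq_norm_sq (𝕜 := ℂ) ((adjoint X) v)

private lemma isPositive_mul_star' (X : H →L[ℂ] H) : (X * star X).IsPositive := by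
  have := (ContinuousLinearMap.isPositive_one (E := H) (𝕜 := ℂ)).conj_adjoint X
  simpa [star_eq_adjoint, mul_def, one_def] using this

private lemma diag_conj' (T R : H →L[ℂ] H) (hR : IsSelfAdjoint R) (v : H) :
    (inner ℂ ((R * T * R) v) v : ℂ) = inner ℂ (T (R v)) (R v) := by
  rw [mul_apply_eq_comp, mul_apply_eq_comp]
  have h1 : ∀ w, (inner ℂ (R w) v : ℂ) = inner ℂ w (R v) := fun w => by
    simpa [hR.adjoint_eq] using adjoint_inner_left R v w
  exact h1 _

private lemma isPositive_conj' {T : H →L[ℂ] H} (hT : T.IsPositive) {R : H →L[ℂ] H}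
    (hR : IsSelfAdjoint R) : (R * T * R).IsPositive := by
  have := hT.adjoint_conj R
  rwa [hR.adjoint_eq, ← mul_def, ← mul_def] at this

end Helpers

/-- A (bounded) operator is trace class iff it is the difference of two positive operators
whose diagonals with respect to the Hilbert basis `e` are summable.  (For self-adjoint
operators this is equivalent to membership in the trace class `S₁`.) -/
def IsTraceClassDiag {H : Type*} [NormedAddCommGroup H] [InnerProductSpace ℂ H]
    [CompleteSpace H] {ι : Type*} (e : HilbertBasis ι ℂ H) (T : H →L[ℂ] H) : Prop :=
  ∃ T₁ T₂ : H →L[ℂ] H, T₁.IsPositive ∧ T₂.IsPositive ∧ T = T₁ - T₂ ∧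
    (Summable fun i => (inner ℂ (T₁ (e i)) (e i) : ℂ).re) ∧
    (Summable fun i => (inner ℂ (T₂ (e i)) (e i) : ℂ).re)

private lemma tcd_diag_summable {H : Type*} [NormedAddCommGroup H] [InnerProductSpace ℂ H]
    [CompleteSpace H] {ι : Type*} {e : HilbertBasis ι ℂ H} {T : H →L[ℂ] H}
    (h : IsTraceClassDiag e T) :
    Summable fun i => (inner ℂ (T (e i)) (e i) : ℂ).re := by
  obtain ⟨T₁, T₂, -, -, rfl, s₁, s₂⟩ := h
  simpa [ContinuousLinearMap.sub_apply, inner_sub_left, Complex.sub_re] using s₁.sub s₂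

/-- Lemma on traces: with `P = 1_{A<0}`, `Q = 1_{B<0}`, if `P(B-A)P ∈ S₁` then
`P(B_- - A_-)P, (1-P)(B_- - A_-)(1-P) ∈ S₁` iff `(Q-P)|B|^{1/2} ∈ S₂`, and in that case
`tr P(B_- - A_-)P + tr (1-P)(B_- - A_-)(1-P) + tr P(B-A)P = ‖(Q-P)|B|^{1/2}‖_{S₂}²`. -/
theorem stmt2 {H : Type*} [NormedAddCommGroup H] [InnerProductSpace ℂ H] [CompleteSpace H]
    {ι : Type*} (e : HilbertBasis ι ℂ H)
    (A B P Q Ap Am Bp Bm S : H →L[ℂ] H)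
    (hA : IsSelfAdjoint A) (hB : IsSelfAdjoint B)
    (hAp : Ap.IsPositive) (hAm : Am.IsPositive) (hAdec : A = Ap - Am) (hAorth : Ap * Am = 0)
    (hBp : Bp.IsPositive) (hBm : Bm.IsPositive) (hBdec : B = Bp - Bm) (hBorth : Bp * Bm = 0)
    (hP : IsSelfAdjoint P) (hP2 : P * P = P) (hPAp : P * Ap = 0) (hPAm : P * Am = Am)
    (hQ : IsSelfAdjoint Q) (hQ2 : Q * Q = Q) (hQBp : Q * Bp = 0) (hQBm : Q * Bm = Bm)
    (hS : S.IsPositive) (hS2 : S * S = Bp + Bm)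
    (hV : IsTraceClassDiag e (P * (B - A) * P)) :
    ((IsTraceClassDiag e (P * (Bm - Am) * P) ∧
        IsTraceClassDiag e ((1 - P) * (Bm - Am) * (1 - P))) ↔
      Summable (fun i => ‖((Q - P) * S) (e i)‖ ^ 2)) ∧
    ((IsTraceClassDiag e (P * (Bm - Am) * P) ∧
        IsTraceClassDiag e ((1 - P) * (Bm - Am) * (1 - P))) →
      (Summable fun i => (inner ℂ ((P * (Bm - Am) * P) (e i)) (e i) : ℂ).re) ∧
      (Summable fun i => (inner ℂ (((1 - P) * (Bm - Am) * (1 - P)) (e i)) (e i) : ℂ).re) ∧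
      (Summable fun i => (inner ℂ ((P * (B - A) * P) (e i)) (e i) : ℂ).re) ∧
      (∑' i, (inner ℂ ((P * (Bm - Am) * P) (e i)) (e i) : ℂ).re) +
          (∑' i, (inner ℂ (((1 - P) * (Bm - Am) * (1 - P)) (e i)) (e i) : ℂ).re) +
          (∑' i, (inner ℂ ((P * (B - A) * P) (e i)) (e i) : ℂ).re) =
        ∑' i, ‖((Q - P) * S) (e i)‖ ^ 2) := by
  -- adjoint-transposed relations
  have hApP : Ap * P = 0 := by
    have := congrArg star hPAp
    simpa [star_mul, hAp.isSelfAdjoint.star_eq, hP.star_eq] using this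
  have hAmP : Am * P = Am := by
    have := congrArg star hPAm
    simpa [star_mul, hAm.isSelfAdjoint.star_eq, hP.star_eq] using this
  have hBpQ : Bp * Q = 0 := by
    have := congrArg star hQBp
    simpa [star_mul, hBp.isSelfAdjoint.star_eq, hQ.star_eq] using this
  have hBmQ : Bm * Q = Bm := by
    have := congrArg star hQBm
    simpa [star_mul, hBm.isSelfAdjoint.star_eq, hQ.star_eq] using this
  set X : H →L[ℂ] H := (Q - P) * S with hX
  have hXs : star X = S * (Q - P) := by
    rw [hX, star_mul, star_sub, hQ.star_eq, hP.star_eq, hS.isSelfAdjoint.star_eq]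
  -- the main algebraic identity
  have main : X * star X =
      P * (Bm - Am) * P + (1 - P) * (Bm - Am) * (1 - P) + P * (B - A) * P := by
    rw [hXs, hX, hAdec, hBdec]
    have l1 : ((Q-P)*S)*(S*(Q-P)) = (Q-P)*(Bp+Bm)*(Q-P) := by rw [← hS2]; noncomm_ring
    rw [l1]
    have e1 : ∀ z, Q*(Bp*z) = 0 := fun z => by rw [← mul_assoc, hQBp, zero_mul]
    have e2 : ∀ z, Q*(Bm*z) = Bm*z := fun z => by rw [← mul_assoc, hQBm]
    have e3 : ∀ z, P*(Ap*z) = 0 := fun z => by rw [← mul_assoc, hPAp, zero_mul]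
    have e4 : ∀ z, P*(Am*z) = Am*z := fun z => by rw [← mul_assoc, hPAm]
    simp only [mul_sub, sub_mul, mul_add, add_mul, mul_one, one_mul, mul_assoc,
      e1, e2, e3, e4, hQBp, hQBm, hBpQ, hBmQ, hPAp, hApP, hPAm, hAmP, mul_zero, zero_mul,
      sub_zero, zero_sub, neg_mul, mul_neg, neg_neg, sub_self]
    abel
  -- projection algebra
  have hP1 : (1 - P) * P = 0 := by rw [sub_mul, one_mul, hP2, sub_self]
  have hP1' : P * (1 - P) = 0 := by rw [mul_sub, mul_one, hP2, sub_self]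
  have h1P2 : (1 - P) * (1 - P) = 1 - P := by rw [mul_sub, mul_one, hP1, sub_zero]
  -- compressions of the main identity
  have cT1 : P * (X * star X) * P = P * (Bm - Am) * P + P * (B - A) * P := by
    rw [main]
    have y1 : ∀ M : H →L[ℂ] H, P*(P*M*P)*P = P*M*P := fun M => by
      rw [show P*(P*M*P)*P = (P*P)*M*(P*P) from by noncomm_ring, hP2]
    have y2 : ∀ M : H →L[ℂ] H, P*((1-P)*M*(1-P))*P = 0 := fun M => by
      rw [show P*((1-P)*M*(1-P))*P = (P*(1-P))*M*((1-P)*P) from by noncomm_ring, hP1',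
        zero_mul, zero_mul]
    simp only [mul_add, add_mul, y1, y2]
    abel
  have cT2 : (1 - P) * (X * star X) * (1 - P) = (1 - P) * (Bm - Am) * (1 - P) := by
    rw [main]
    have y1 : ∀ M : H →L[ℂ] H, (1-P)*(P*M*P)*(1-P) = 0 := fun M => by
      rw [show (1-P)*(P*M*P)*(1-P) = ((1-P)*P)*M*(P*(1-P)) from by noncomm_ring, hP1,
        zero_mul, zero_mul]
    have y2 : (1-P)*((1-P)*(Bm-Am)*(1-P))*(1-P) = (1-P)*(Bm-Am)*(1-P) := by
      rw [show (1-P)*((1-P)*(Bm-Am)*(1-P))*(1-P) = ((1-P)*(1-P))*(Bm-Am)*((1-P)*(1-P)) from by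
        noncomm_ring, h1P2]
    simp only [mul_add, add_mul, y1, y2]
    abel
  -- diagonal identities
  have diagXX : ∀ v, (inner ℂ ((X * star X) v) v : ℂ).re = ‖(star X) v‖ ^ 2 := diag_mul_star' X
  have diag_sum : ∀ v : H,
      (inner ℂ ((P * (Bm - Am) * P) v) v : ℂ).re +
        (inner ℂ (((1 - P) * (Bm - Am) * (1 - P)) v) v : ℂ).re +
        (inner ℂ ((P * (B - A) * P) v) v : ℂ).re = ‖(star X) v‖ ^ 2 := by
    intro v
    have h := congrArg (fun T : H →L[ℂ] H => (inner ℂ (T v) v : ℂ).re) main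
    simp only [ContinuousLinearMap.add_apply, inner_add_left, Complex.add_re] at h
    rw [← h, diagXX]
  have h1Psa : IsSelfAdjoint (1 - P) := (IsSelfAdjoint.one (R := H →L[ℂ] H)).sub hP
  have diagP : ∀ v, (inner ℂ ((P * (X * star X) * P) v) v : ℂ).re = ‖(star X * P) v‖ ^ 2 := by
    intro v
    rw [diag_conj' _ _ hP v, mul_apply_eq_comp]
    exact diag_mul_star' X (P v)
  have diag1P : ∀ v, (inner ℂ (((1-P) * (X * star X) * (1-P)) v) v : ℂ).re
      = ‖(star X * (1-P)) v‖ ^ 2 := by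
    intro v
    rw [diag_conj' _ _ h1Psa v, mul_apply_eq_comp]
    exact diag_mul_star' X ((1-P) v)
  -- summability transport under the hypothesis on X
  have transport : ∀ Y : H →L[ℂ] H, IsSelfAdjoint Y →
      (Summable fun i => ‖X (e i)‖ ^ 2) → Summable fun i => ‖(star X * Y) (e i)‖ ^ 2 := by
    intro Y hY hsum
    have h1 : Summable fun i => ‖(Y * X) (e i)‖ ^ 2 := summable_comp' e Y hsum
    have h2 : star (star X * Y) = Y * X := by rw [star_mul, star_star, hY.star_eq]
    exact (key_summable_iff e _).mpr (h2 ▸ h1)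
  -- the backward direction: S₂ condition implies trace class
  have backward : (Summable fun i => ‖X (e i)‖ ^ 2) →
      IsTraceClassDiag e (P * (Bm - Am) * P) ∧
        IsTraceClassDiag e ((1 - P) * (Bm - Am) * (1 - P)) := by
    intro hsum
    obtain ⟨V₁, V₂, pV₁, pV₂, hVdec, sV₁, sV₂⟩ := hV
    constructor
    · refine ⟨P * (X * star X) * P + V₂, V₁,
        (isPositive_conj' (isPositive_mul_star' X) hP).add pV₂, pV₁, ?_, ?_, sV₁⟩
      · rw [show P * (Bm - Am) * P = P * (X * star X) * P - (P * (B - A) * P) from by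
          rw [cT1]; abel, hVdec]
        abel
      · have hfun : (fun i => (inner ℂ ((P * (X * star X) * P + V₂) (e i)) (e i) : ℂ).re)
            = fun i => ‖(star X * P) (e i)‖ ^ 2 + (inner ℂ (V₂ (e i)) (e i) : ℂ).re := by
          funext i
          simp only [ContinuousLinearMap.add_apply, inner_add_left, Complex.add_re, diagP]
        rw [hfun]
        exact (transport P hP hsum).add sV₂
    · refine ⟨(1 - P) * (X * star X) * (1 - P), 0,
        isPositive_conj' (isPositive_mul_star' X) h1Psa, ContinuousLinearMap.isPositive_zero,
        by rw [sub_zero, cT2], ?_, by simpa using summable_zero⟩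
      have hfun : (fun i => (inner ℂ (((1-P) * (X * star X) * (1-P)) (e i)) (e i) : ℂ).re)
          = fun i => ‖(star X * (1-P)) (e i)‖ ^ 2 := funext fun i => diag1P (e i)
      rw [hfun]
      exact transport (1 - P) h1Psa hsum
  -- the forward direction: trace class implies S₂ condition
  have forward : IsTraceClassDiag e (P * (Bm - Am) * P) →
      IsTraceClassDiag e ((1 - P) * (Bm - Am) * (1 - P)) →
      Summable fun i => ‖X (e i)‖ ^ 2 := by
    intro h1 h2
    have s1 := tcd_diag_summable h1
    have s2 := tcd_diag_summable h2
    have s3 := tcd_diag_summable hV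
    have hXs_sum : Summable fun i => ‖(star X) (e i)‖ ^ 2 := by
      have := (s1.add s2).add s3
      apply this.congr
      intro i
      exact diag_sum (e i)
    rw [key_summable_iff e X]
    exact hXs_sum
  refine ⟨⟨fun h => forward h.1 h.2, backward⟩, ?_⟩
  rintro ⟨h1, h2⟩
  have s1 := tcd_diag_summable h1
  have s2 := tcd_diag_summable h2
  have s3 := tcd_diag_summable hV
  have hsumX : Summable fun i => ‖X (e i)‖ ^ 2 := forward h1 h2
  have hXs_sum : Summable fun i => ‖(star X) (e i)‖ ^ 2 := (key_summable_iff e X).1 hsumX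
  refine ⟨s1, s2, s3, ?_⟩
  have step1 : (∑' i, (inner ℂ ((P * (Bm - Am) * P) (e i)) (e i) : ℂ).re) +
      (∑' i, (inner ℂ (((1 - P) * (Bm - Am) * (1 - P)) (e i)) (e i) : ℂ).re) +
      (∑' i, (inner ℂ ((P * (B - A) * P) (e i)) (e i) : ℂ).re)
      = ∑' i, ‖(star X) (e i)‖ ^ 2 := by
    rw [← Summable.tsum_add s1 s2, ← Summable.tsum_add (s1.add s2) s3]
    exact tsum_congr fun i => diag_sum (e i)
  rw [step1, ← key_tsum_eq e X hsumX]
end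

section
/- For every real γ > 1, every μ ∈ ℝ, and every real v, one has ∫_0^∞ ((v-μ+τ)_-^{1+d/2} - (μ-τ)_+^{1+d/2} + (1+d/2)(μ-τ)_+^{d/2} v) τ^{γ-2} dτ = (Γ(d/2+2) Γ(γ-1)/Γ(γ+d/2+1)) ((v-μ)_-^{γ+d/2} - μ_+^{γ+d/2} + (γ+d/2) μ_+^{γ+d/2-1} v), where d ≥ 1 is an integer. -/
open MeasureTheory Set

lemma realBeta {s t : ℝ} (hs : 0 < s) (ht : 0 < t) :
    ∫ x in (0:ℝ)..1, x ^ (s - 1) * (1 - x) ^ (t - 1)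
      = Real.Gamma s * Real.Gamma t / Real.Gamma (s + t) := by
  have h := Complex.Gamma_mul_Gamma_eq_betaIntegral (s := (s:ℂ)) (t := (t:ℂ))
    (by simpa using hs) (by simpa using ht)
  have hb : Complex.betaIntegral s t
      = ((∫ x in (0:ℝ)..1, x ^ (s - 1) * (1 - x) ^ (t - 1) : ℝ) : ℂ) := by
    rw [Complex.betaIntegral, ← intervalIntegral.integral_ofReal]
    refine intervalIntegral.integral_congr fun x hx => ?_
    rw [Set.uIcc_of_le zero_le_one] at hx
    push_cast
    rw [Complex.ofReal_cpow hx.1, Complex.ofReal_cpow (by linarith [hx.2] : (0:ℝ) ≤ 1 - x)]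
    push_cast
    ring
  rw [hb, ← Complex.ofReal_add, Complex.Gamma_ofReal, Complex.Gamma_ofReal,
    Complex.Gamma_ofReal, ← Complex.ofReal_mul, ← Complex.ofReal_mul] at h
  have h' := Complex.ofReal_injective h
  have hG : Real.Gamma (s + t) ≠ 0 := (Real.Gamma_pos_of_pos (by linarith)).ne'
  field_simp
  linarith [h']

lemma auxCont {p : ℝ} (hp : 0 < p) (c : ℝ) :
    Continuous fun τ : ℝ => max (c - τ) 0 ^ p := by
  apply Continuous.comp (g := fun x : ℝ => x ^ p)
  · rw [continuous_iff_continuousAt]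
    intro x
    exact Real.continuousAt_rpow_const x p (Or.inr hp.le)
  · exact (continuous_const.sub continuous_id).max continuous_const

lemma auxIntegrable (c : ℝ) {p γ : ℝ} (hp : 0 < p) (hγ : 1 < γ) :
    IntegrableOn (fun τ => max (c - τ) 0 ^ p * τ ^ (γ - 2)) (Ioi 0) := by
  have hM1 : (1:ℝ) ≤ max c 1 := le_max_right c 1
  have hM : (0:ℝ) < max c 1 := by linarith
  rw [show Ioi (0:ℝ) = Ioc 0 (max c 1) ∪ Ioi (max c 1) from
    (Ioc_union_Ioi_eq_Ioi hM.le).symm, integrableOn_union]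
  constructor
  · have h1 : IntervalIntegrable (fun τ : ℝ => τ ^ (γ - 2)) volume 0 (max c 1) :=
      intervalIntegral.intervalIntegrable_rpow' (by linarith)
    have h2 := h1.continuousOn_mul ((auxCont hp c).continuousOn)
    exact (intervalIntegrable_iff_integrableOn_Ioc_of_le hM.le).mp h2
  · refine (integrableOn_congr_fun (fun τ hτ => ?_) measurableSet_Ioi).mpr
      integrableOn_zero
    have hτ' : c - τ < 0 := by
      have : c ≤ max c 1 := le_max_left c 1
      have := hτ
      simp only [mem_Ioi] at this
      linarith
    simp [max_eq_right hτ'.le, Real.zero_rpow hp.ne']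

lemma auxValue (c : ℝ) {p γ : ℝ} (hp : 0 < p) (hγ : 1 < γ) :
    ∫ τ in Ioi (0:ℝ), max (c - τ) 0 ^ p * τ ^ (γ - 2)
      = Real.Gamma (p + 1) * Real.Gamma (γ - 1) / Real.Gamma (γ + p)
        * max c 0 ^ (γ + p - 1) := by
  rcases le_or_gt c 0 with hc | hc
  · rw [max_eq_right hc, Real.zero_rpow (by linarith : (0:ℝ) < γ + p - 1).ne']
    rw [setIntegral_congr_fun measurableSet_Ioi (g := fun _ => (0:ℝ))
      (fun τ hτ => by
        simp only [mem_Ioi] at hτ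
        have : c - τ < 0 := by linarith
        simp [max_eq_right this.le, Real.zero_rpow hp.ne'])]
    simp
  · have hdisj : Disjoint (Ioc (0:ℝ) c) (Ioi c) := Ioc_disjoint_Ioi le_rfl
    have hi := auxIntegrable c hp hγ
    rw [show Ioi (0:ℝ) = Ioc 0 c ∪ Ioi c from (Ioc_union_Ioi_eq_Ioi hc.le).symm,
      setIntegral_union hdisj measurableSet_Ioi
        (hi.mono_set (by rw [← Ioc_union_Ioi_eq_Ioi hc.le]; exact subset_union_left))
        (hi.mono_set (by rw [← Ioc_union_Ioi_eq_Ioi hc.le]; exact subset_union_right))]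
    have hz : ∫ τ in Ioi c, max (c - τ) 0 ^ p * τ ^ (γ - 2) = 0 := by
      rw [setIntegral_congr_fun measurableSet_Ioi (g := fun _ => (0:ℝ))
        (fun τ hτ => by
          simp only [mem_Ioi] at hτ
          have : c - τ < 0 := by linarith
          simp [max_eq_right this.le, Real.zero_rpow hp.ne'])]
      simp
    rw [hz, add_zero, ← intervalIntegral.integral_of_le hc.le]
    have hsub := intervalIntegral.smul_integral_comp_mul_left
      (f := fun τ => max (c - τ) 0 ^ p * τ ^ (γ - 2)) (a := 0) (b := 1) c
    rw [mul_zero, mul_one] at hsub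
    rw [← hsub]
    have hcongr : ∫ x in (0:ℝ)..1, max (c - c * x) 0 ^ p * (c * x) ^ (γ - 2)
        = ∫ x in (0:ℝ)..1, c ^ (γ + p - 2) * (x ^ (γ - 2) * (1 - x) ^ p) := by
      refine intervalIntegral.integral_congr fun x hx => ?_
      rw [Set.uIcc_of_le zero_le_one] at hx
      have h1 : (0:ℝ) ≤ 1 - x := by linarith [hx.2]
      have h2 : max (c - c * x) 0 = c * (1 - x) := by
        rw [max_eq_left (by nlinarith)]; ring
      rw [h2, Real.mul_rpow hc.le h1, Real.mul_rpow hc.le hx.1,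
        show γ + p - 2 = p + (γ - 2) by ring, Real.rpow_add hc]
      ring
    rw [hcongr, intervalIntegral.integral_const_mul]
    have hbeta : ∫ x in (0:ℝ)..1, x ^ (γ - 2) * (1 - x) ^ p
        = Real.Gamma (γ - 1) * Real.Gamma (p + 1) / Real.Gamma (γ + p) := by
      have := realBeta (s := γ - 1) (t := p + 1) (by linarith) (by linarith)
      rw [show γ - 1 - 1 = γ - 2 by ring, show p + 1 - 1 = p by ring,
        show γ - 1 + (p + 1) = γ + p by ring] at this
      exact this
    rw [hbeta, max_eq_left hc.le, smul_eq_mul]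
    rw [show γ + p - 1 = 1 + (γ + p - 2) by ring, Real.rpow_add hc, Real.rpow_one]
    ring

/-- Beta-function identity used in the Aizenman--Lieb argument. -/
theorem stmt4 (d : ℕ) (hd : 1 ≤ d) (γ μ v : ℝ) (hγ : 1 < γ) :
    (∫ τ in Set.Ioi (0 : ℝ),
        ((max (-(v - μ + τ)) 0) ^ (1 + (d : ℝ) / 2) - (max (μ - τ) 0) ^ (1 + (d : ℝ) / 2) +
            (1 + (d : ℝ) / 2) * (max (μ - τ) 0) ^ ((d : ℝ) / 2) * v) * τ ^ (γ - 2)) =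
      Real.Gamma ((d : ℝ) / 2 + 2) * Real.Gamma (γ - 1) / Real.Gamma (γ + (d : ℝ) / 2 + 1) *
        ((max (-(v - μ)) 0) ^ (γ + (d : ℝ) / 2) - (max μ 0) ^ (γ + (d : ℝ) / 2) +
          (γ + (d : ℝ) / 2) * (max μ 0) ^ (γ + (d : ℝ) / 2 - 1) * v) := by
  have hd1 : (1:ℝ) ≤ (d:ℝ) := by exact_mod_cast hd
  have hp : (0:ℝ) < 1 + (d:ℝ)/2 := by linarith
  have hq : (0:ℝ) < (d:ℝ)/2 := by linarith
  have i1 := auxIntegrable (μ - v) hp hγ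
  have i2 := auxIntegrable μ hp hγ
  have i3 := auxIntegrable μ hq hγ
  have key1 := auxValue (μ - v) hp hγ
  have key2 := auxValue μ hp hγ
  have key3 := auxValue μ hq hγ
  have hLHS : (∫ τ in Set.Ioi (0 : ℝ),
        ((max (-(v - μ + τ)) 0) ^ (1 + (d : ℝ) / 2) - (max (μ - τ) 0) ^ (1 + (d : ℝ) / 2) +
            (1 + (d : ℝ) / 2) * (max (μ - τ) 0) ^ ((d : ℝ) / 2) * v) * τ ^ (γ - 2))
      = ∫ τ in Set.Ioi (0 : ℝ),
        ((max (μ - v - τ) 0 ^ (1 + (d : ℝ) / 2) * τ ^ (γ - 2)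
          - max (μ - τ) 0 ^ (1 + (d : ℝ) / 2) * τ ^ (γ - 2))
          + ((1 + (d : ℝ) / 2) * v) * (max (μ - τ) 0 ^ ((d : ℝ) / 2) * τ ^ (γ - 2))) := by
    refine setIntegral_congr_fun measurableSet_Ioi fun τ _ => ?_
    rw [show -(v - μ + τ) = μ - v - τ by ring]
    ring
  rw [hLHS,
    integral_add
      (f := fun τ => max (μ - v - τ) 0 ^ (1 + (d:ℝ)/2) * τ ^ (γ - 2)
        - max (μ - τ) 0 ^ (1 + (d:ℝ)/2) * τ ^ (γ - 2))
      (g := fun τ => ((1 + (d:ℝ)/2) * v) * (max (μ - τ) 0 ^ ((d:ℝ)/2) * τ ^ (γ - 2)))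
      (i1.sub i2) (i3.const_mul _),
    integral_sub i1 i2, integral_const_mul, key1, key2, key3]
  rw [show -(v - μ) = μ - v by ring,
    show (1 + (d:ℝ)/2) + 1 = (d:ℝ)/2 + 2 by ring,
    show γ + (1 + (d:ℝ)/2) = γ + (d:ℝ)/2 + 1 by ring,
    show γ + (d:ℝ)/2 + 1 - 1 = γ + (d:ℝ)/2 by ring,
    show (d:ℝ)/2 + 1 = (d:ℝ)/2 + 1 by ring]
  have hG1 : Real.Gamma ((d:ℝ)/2 + 2) = ((d:ℝ)/2 + 1) * Real.Gamma ((d:ℝ)/2 + 1) := by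
    rw [show (d:ℝ)/2 + 2 = ((d:ℝ)/2 + 1) + 1 by ring, Real.Gamma_add_one (by linarith)]
  have hG2 : Real.Gamma (γ + (d:ℝ)/2 + 1) = (γ + (d:ℝ)/2) * Real.Gamma (γ + (d:ℝ)/2) := by
    rw [Real.Gamma_add_one (by linarith)]
  have hGpos1 : 0 < Real.Gamma (γ + (d:ℝ)/2) := Real.Gamma_pos_of_pos (by linarith)
  have hne : (γ + (d:ℝ)/2) ≠ 0 := by linarith
  rw [hG1, hG2]
  field_simp
  ring
end
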